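/- arXiv:1710.01612 — 3 statements merged into one kernel-verified Lean document; each statement's English description precedes it below -/
import Mathlib

section
/- If g(·+a) ∈ L¹(γ) and g(·+b) ∈ L¹(γ) for real numbers a < b, then g(·+x) ∈ L¹(γ) for every x with a < x < b. -/
open MeasureTheory Real

noncomputable def stdPhi (x : ℝ) : ℝ := (Real.sqrt (2 * Real.pi))⁻¹ * Real.exp (-x ^ 2 / 2)

lemma stdPhi_pos (x : ℝ) : 0 < stdPhi x :=
  mul_pos (inv_pos.mpr (Real.sqrt_pos.mpr (by positivity))) (Real.exp_pos _)

lemma stdPhi_key {a b x : ℝ} (hax : a ≤ x) (hxb : x ≤ b) (z : ℝ) :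
    stdPhi (z - x) ≤ Real.exp ((a^2 - x^2)/2) * stdPhi (z - a)
      + Real.exp ((b^2 - x^2)/2) * stdPhi (z - b) := by
  have hc : (0:ℝ) < (Real.sqrt (2 * Real.pi))⁻¹ :=
    inv_pos.mpr (Real.sqrt_pos.mpr (by positivity))
  rcases le_or_gt z 0 with hz | hz
  · have h1 : stdPhi (z - x) ≤ Real.exp ((a^2 - x^2)/2) * stdPhi (z - a) := by
      unfold stdPhi
      rw [mul_comm (Real.exp ((a^2 - x^2)/2)), mul_assoc, ← Real.exp_add]
      apply mul_le_mul_of_nonneg_left _ hc.le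
      apply Real.exp_le_exp.mpr
      nlinarith [mul_nonneg (sub_nonneg.mpr hax) (neg_nonneg.mpr hz)]
    have h2 : 0 ≤ Real.exp ((b^2 - x^2)/2) * stdPhi (z - b) :=
      mul_nonneg (Real.exp_pos _).le (stdPhi_pos _).le
    linarith
  · have h1 : stdPhi (z - x) ≤ Real.exp ((b^2 - x^2)/2) * stdPhi (z - b) := by
      unfold stdPhi
      rw [mul_comm (Real.exp ((b^2 - x^2)/2)), mul_assoc, ← Real.exp_add]
      apply mul_le_mul_of_nonneg_left _ hc.le
      apply Real.exp_le_exp.mpr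
      nlinarith [mul_nonneg (sub_nonneg.mpr hxb) hz.le]
    have h2 : 0 ≤ Real.exp ((a^2 - x^2)/2) * stdPhi (z - a) :=
      mul_nonneg (Real.exp_pos _).le (stdPhi_pos _).le
    linarith

lemma stdPhi_continuous : Continuous stdPhi := by
  unfold stdPhi
  fun_prop

/-- If `g(·+a), g(·+b) ∈ L¹(γ)` with `a < b`, then `g(·+x) ∈ L¹(γ)` for `a < x < b`. -/
theorem shift_integrable_between
    (g : ℝ → ℝ) (hmeas : Measurable g) (a b : ℝ) (hab : a < b)
    (ha : Integrable (fun z => g (z + a) * stdPhi z))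
    (hb : Integrable (fun z => g (z + b) * stdPhi z)) :
    ∀ x : ℝ, a < x → x < b → Integrable (fun z => g (z + x) * stdPhi z) := by
  intro x hax hxb
  have key : ∀ c : ℝ, Integrable (fun z => g (z + c) * stdPhi z) →
      Integrable (fun w => g w * stdPhi (w - c)) := by
    intro c h
    have := h.comp_add_right (-c)
    simpa [sub_eq_add_neg] using this
  have ha' := key a ha
  have hb' := key b hb
  suffices hx : Integrable (fun w => g w * stdPhi (w - x)) by
    have := hx.comp_add_right x
    simpa using this
  set A := Real.exp ((a^2 - x^2)/2) with hA
  set B := Real.exp ((b^2 - x^2)/2) with hB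
  apply Integrable.mono' ((ha'.norm.const_mul A).add (hb'.norm.const_mul B))
  · exact hmeas.aestronglyMeasurable.mul
      ((stdPhi_continuous.measurable.comp (measurable_id.sub_const x)).aestronglyMeasurable)
  · filter_upwards with w
    have hk := stdPhi_key hax.le hxb.le w
    have hg : (0:ℝ) ≤ |g w| := abs_nonneg _
    simp only [Pi.add_apply, Real.norm_eq_abs, abs_mul, abs_of_pos (stdPhi_pos _)]
    have hA0 : 0 ≤ A := (Real.exp_pos _).le
    have hB0 : 0 ≤ B := (Real.exp_pos _).le
    nlinarith [mul_le_mul_of_nonneg_left hk hg, stdPhi_pos (w - a), stdPhi_pos (w - b)]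
end

section
/- Let G ∈ L²(γ) and define G_∞(x) = E[G(Z+x)] = ∫ G(z) φ(z−x) dz for a standard normal Z. Then G_∞ is well defined for all x ∈ ℝ and admits the everywhere-convergent power series expansion G_∞(x) = Σ_{m=0}^∞ c_m x^m, where c_m = E[G(Z) H_m(Z)]/m!. -/
open MeasureTheory Real

noncomputable def hermiteEval (m : ℕ) (z : ℝ) : ℝ :=
  Polynomial.aeval z (Polynomial.hermite m)

open Nat Finset Polynomial in
lemma fact2k (k : ℕ) : ((2*k)! : ℕ) = 2^k * k ! * (2*k-1)‼ := by
  cases k with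
  | zero => rfl
  | succ n =>
    have h1 : 2*(n+1) = (2*n+1)+1 := by ring
    rw [h1, Nat.factorial_eq_mul_doubleFactorial]
    have h2 : (2*n+1)+1 = 2*(n+1) := by ring
    rw [h2, Nat.doubleFactorial_two_mul]
    have h3 : 2*(n+1)-1 = 2*n+1 := by omega
    rw [h3]

open Nat in
/-- the signed/unsigned hermite-type coefficient -/
noncomputable def Dc (ε : ℝ) (m j : ℕ) : ℝ :=
  if Even (m + j) then ε ^ ((m - j)/2) * (((m - j - 1)‼ * (m.choose j) : ℕ) : ℝ) else 0

open Nat in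
lemma Dc_eval (ε : ℝ) (j k : ℕ) (a b : ℝ) :
    Dc ε (j + 2*k) j * a^j * b^(j+2*k) / ((j+2*k)! : ℝ)
      = ((a*b)^j / (j ! : ℝ)) * ((ε * b^2/2)^k / (k ! : ℝ)) := by
  have hev : Even ((j + 2*k) + j) := ⟨j + k, by ring⟩
  rw [Dc, if_pos hev]
  have h1 : (j + 2*k - j)/2 = k := by omega
  have h2 : j + 2*k - j - 1 = 2*k - 1 := by omega
  rw [h1, h2]
  have natkey : ((2*k-1)‼ * ((j+2*k).choose j)) * (j ! * (2^k * k !)) = (j+2*k)! := by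
    have h3 := Nat.choose_mul_factorial_mul_factorial (Nat.le_add_right j (2*k))
    rw [Nat.add_sub_cancel_left] at h3
    rw [← h3, fact2k]
    ring
  have hkey : (((2*k-1)‼ * ((j+2*k).choose j) : ℕ) : ℝ) * ((j ! : ℝ) * (2^k * (k ! : ℝ))) = ((j+2*k)! : ℝ) := by
    exact_mod_cast natkey
  have hb : b^(j+2*k) = b^j * (b^2)^k := by rw [pow_add, pow_mul]
  have hd : (ε * b^2/2)^k = ε^k * (b^2)^k / 2^k := by rw [div_pow, mul_pow]
  rw [hb, hd, mul_pow]
  have f1 : ((j+2*k)! : ℝ) ≠ 0 := by positivity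
  have f2 : (j ! : ℝ) ≠ 0 := by positivity
  have f3 : (k ! : ℝ) ≠ 0 := by positivity
  field_simp
  push_cast at hkey ⊢
  linear_combination (ε^k * a^j * (b^j * (b^2)^k)) * hkey

open Nat in
lemma Dc_zero_of_lt {ε : ℝ} {m j : ℕ} (h : m < j) : Dc ε m j = 0 := by
  unfold Dc
  split_ifs with he
  · rw [Nat.choose_eq_zero_of_lt h]
    simp
  · rfl

open Nat in
lemma hasSum_Dc (ε a b : ℝ) :
    HasSum (fun m : ℕ => (∑ j ∈ Finset.range (m+1), Dc ε m j * a^j) * b^m / (m ! : ℝ))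
      (Real.exp (a*b + ε * b^2/2)) := by
  set f : ℕ → ℝ := fun j => (a*b)^j / (j ! : ℝ) with hf
  set g : ℕ → ℝ := fun k => (ε*b^2/2)^k / (k ! : ℝ) with hg
  have h1 : HasSum f (Real.exp (a*b)) := by
    rw [Real.exp_eq_exp_ℝ]; exact NormedSpace.expSeries_div_hasSum_exp (a*b)
  have h2 : HasSum g (Real.exp (ε*b^2/2)) := by
    rw [Real.exp_eq_exp_ℝ]; exact NormedSpace.expSeries_div_hasSum_exp (ε*b^2/2)
  have hnf : Summable (fun j => ‖f j‖) := by
    refine (Real.summable_pow_div_factorial |a*b|).congr fun j => ?_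
    simp [hf, abs_div, abs_pow, abs_mul]
  have hng : Summable (fun k => ‖g k‖) := by
    refine (Real.summable_pow_div_factorial |ε*b^2/2|).congr fun k => ?_
    simp [hg, abs_div, abs_pow, abs_mul, sq_abs]
  have hsum : Summable (fun p : ℕ × ℕ => f p.1 * g p.2) :=
    summable_mul_of_summable_norm hnf hng
  have hprod : HasSum (fun p : ℕ × ℕ => f p.1 * g p.2)
      (Real.exp (a*b + ε * b^2/2)) := by
    rw [Real.exp_add]; exact h1.mul h2 hsum
  -- reindex
  set F : ℕ × ℕ → ℝ := fun p => Dc ε p.1 p.2 * a^p.2 * b^p.1 / ((p.1)! : ℝ) with hF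
  set i : ℕ × ℕ → ℕ × ℕ := fun q => (q.1 + 2*q.2, q.1) with hi
  have hinj : Function.Injective i := by
    rintro ⟨j, k⟩ ⟨j', k'⟩ h
    have h' : j + 2*k = j' + 2*k' ∧ j = j' := by simpa [hi, Prod.ext_iff] using h
    simp only [Prod.mk.injEq]
    omega
  have hsupp : ∀ p, p ∉ Set.range i → F p = 0 := by
    rintro ⟨m, j⟩ hp
    by_contra hne
    apply hp
    have hD : Dc ε m j ≠ 0 := by
      intro h0; apply hne; simp [hF, h0]
    have hev : Even (m + j) := by
      by_contra hodd; apply hD; simp [Dc, hodd]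
    have hle : j ≤ m := by
      by_contra hlt
      exact hD (Dc_zero_of_lt (by omega))
    obtain ⟨c, hc⟩ := hev
    refine ⟨(j, (m - j)/2), ?_⟩
    simp only [hi, Prod.mk.injEq]
    exact ⟨by omega, trivial⟩
  have hFi : HasSum (F ∘ i) (Real.exp (a*b + ε * b^2/2)) := by
    have heq : (F ∘ i) = fun q : ℕ × ℕ => f q.1 * g q.2 := by
      funext q
      exact Dc_eval ε q.1 q.2 a b
    rw [heq]; exact hprod
  have hFsum : HasSum F (Real.exp (a*b + ε * b^2/2)) := (hinj.hasSum_iff hsupp).mp hFi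
  have hrow : ∀ m : ℕ, HasSum (fun j => F (m, j))
      ((∑ j ∈ Finset.range (m+1), Dc ε m j * a^j) * b^m / (m ! : ℝ)) := by
    intro m
    have hz : ∀ j ∉ Finset.range (m+1), F (m, j) = 0 := by
      intro j hj
      simp only [Finset.mem_range, not_lt] at hj
      simp [hF, Dc_zero_of_lt (by omega : m < j)]
    have h := hasSum_sum_of_ne_finset_zero (L := SummationFilter.unconditional ℕ) hz
    rw [Finset.sum_mul, Finset.sum_div]
    exact h
  exact hFsum.prod_fiberwise hrow

lemma Dc_neg_one (m j : ℕ) : Dc (-1) m j = (((Polynomial.hermite m).coeff j : ℤ) : ℝ) := by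
  rw [Polynomial.coeff_hermite]
  unfold Dc
  split_ifs with h
  · push_cast
    ring
  · simp

lemma Dc_one (m j : ℕ) : Dc 1 m j = |(((Polynomial.hermite m).coeff j : ℤ) : ℝ)| := by
  rw [Polynomial.coeff_hermite]
  unfold Dc
  split_ifs with h
  · push_cast
    rw [abs_mul, abs_mul, abs_pow, abs_neg, abs_one, one_pow, Nat.abs_cast, Nat.abs_cast]
    ring
  · simp

lemma hermiteEval_eq_sum (m : ℕ) (z : ℝ) :
    hermiteEval m z = ∑ j ∈ Finset.range (m+1), (((Polynomial.hermite m).coeff j : ℤ) : ℝ) * z^j := by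
  rw [hermiteEval, Polynomial.aeval_eq_sum_range' (n := m+1)
    (by rw [Polynomial.natDegree_hermite]; omega)]
  refine Finset.sum_congr rfl fun j _ => ?_
  rw [zsmul_eq_mul]

lemma hasSum_hermite (z x : ℝ) :
    HasSum (fun m : ℕ => hermiteEval m z * x^m / (Nat.factorial m : ℝ))
      (Real.exp (x*z - x^2/2)) := by
  have h := hasSum_Dc (-1) z x
  have harg : z*x + (-1) * x^2/2 = x*z - x^2/2 := by ring
  rw [harg] at h
  have heq : (fun m : ℕ => hermiteEval m z * x^m / (Nat.factorial m : ℝ))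
      = fun m : ℕ => (∑ j ∈ Finset.range (m+1), Dc (-1) m j * z^j) * x^m / (Nat.factorial m : ℝ) := by
    funext m
    rw [hermiteEval_eq_sum]
    congr 1
    congr 1
    exact Finset.sum_congr rfl fun j _ => by rw [Dc_neg_one]
  rw [heq]
  exact h

noncomputable def hermiteAbs (m : ℕ) (z : ℝ) : ℝ :=
  ∑ j ∈ Finset.range (m+1), |(((Polynomial.hermite m).coeff j : ℤ) : ℝ)| * |z|^j

lemma abs_hermiteEval_le (m : ℕ) (z : ℝ) : |hermiteEval m z| ≤ hermiteAbs m z := by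
  rw [hermiteEval_eq_sum]
  refine (Finset.abs_sum_le_sum_abs _ _).trans ?_
  refine Finset.sum_le_sum fun j _ => ?_
  rw [abs_mul, abs_pow]

lemma hermiteAbs_nonneg (m : ℕ) (z : ℝ) : 0 ≤ hermiteAbs m z :=
  Finset.sum_nonneg fun j _ => mul_nonneg (abs_nonneg _) (pow_nonneg (abs_nonneg _) _)

lemma hasSum_hermiteAbs (z x : ℝ) :
    HasSum (fun m : ℕ => hermiteAbs m z * |x|^m / (Nat.factorial m : ℝ))
      (Real.exp (|z| * |x| + x^2/2)) := by
  have h := hasSum_Dc 1 |z| |x|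
  have harg : |z| * |x| + 1*|x|^2/2 = |z| * |x| + x^2/2 := by
    rw [one_mul, sq_abs]
  rw [harg] at h
  have heq : (fun m : ℕ => hermiteAbs m z * |x|^m / (Nat.factorial m : ℝ))
      = fun m : ℕ => (∑ j ∈ Finset.range (m+1), Dc 1 m j * |z|^j) * |x|^m / (Nat.factorial m : ℝ) := by
    funext m
    congr 2
    exact Finset.sum_congr rfl fun j _ => by rw [Dc_one]
  rw [heq]
  exact h

lemma pow_le_fact_mul_exp (t : ℝ) (ht : 0 ≤ t) (j : ℕ) :
    t^j ≤ (Nat.factorial j : ℝ) * Real.exp t := by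
  have h : HasSum (fun n : ℕ => t^n / (Nat.factorial n : ℝ)) (Real.exp t) := by
    rw [Real.exp_eq_exp_ℝ]; exact NormedSpace.expSeries_div_hasSum_exp t
  have hle : t^j / (Nat.factorial j : ℝ) ≤ Real.exp t :=
    le_hasSum h j fun n _ => by positivity
  have hfac : (0:ℝ) < (Nat.factorial j : ℝ) := by positivity
  calc t^j = (t^j / (Nat.factorial j : ℝ)) * (Nat.factorial j : ℝ) := by field_simp
    _ ≤ Real.exp t * (Nat.factorial j : ℝ) := by gcongr
    _ = (Nat.factorial j : ℝ) * Real.exp t := by ring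

lemma hermiteAbs_bound (m : ℕ) : ∃ C : ℝ, 0 ≤ C ∧
    ∀ z, hermiteAbs m z ≤ C * (Real.exp z + Real.exp (-z)) := by
  refine ⟨∑ j ∈ Finset.range (m+1), |(((Polynomial.hermite m).coeff j : ℤ) : ℝ)| * (Nat.factorial j : ℝ),
    Finset.sum_nonneg fun j _ => by positivity, fun z => ?_⟩
  have hexp : Real.exp |z| ≤ Real.exp z + Real.exp (-z) := by
    rcases le_or_gt 0 z with h | h
    · rw [abs_of_nonneg h]; nlinarith [Real.exp_pos (-z)]
    · rw [abs_of_neg h]; nlinarith [Real.exp_pos z]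
  rw [Finset.sum_mul]
  refine Finset.sum_le_sum fun j _ => ?_
  calc |(((Polynomial.hermite m).coeff j : ℤ) : ℝ)| * |z|^j
      ≤ |(((Polynomial.hermite m).coeff j : ℤ) : ℝ)| * ((Nat.factorial j : ℝ) * Real.exp |z|) := by
        gcongr
        exact pow_le_fact_mul_exp |z| (abs_nonneg z) j
    _ ≤ |(((Polynomial.hermite m).coeff j : ℤ) : ℝ)| * ((Nat.factorial j : ℝ) * (Real.exp z + Real.exp (-z))) := by
        gcongr
    _ = |(((Polynomial.hermite m).coeff j : ℤ) : ℝ)| * (Nat.factorial j : ℝ) * (Real.exp z + Real.exp (-z)) := by ring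

lemma stdPhi_nonneg (z : ℝ) : 0 ≤ stdPhi z := by
  unfold stdPhi; positivity

lemma stdPhi_shift (x z : ℝ) : stdPhi (z - x) = Real.exp (x*z - x^2/2) * stdPhi z := by
  unfold stdPhi
  rw [← mul_assoc, mul_comm (Real.exp (x*z - x^2/2)), mul_assoc, ← Real.exp_add]
  congr 1
  ring

lemma int_exp_phi (c : ℝ) : Integrable (fun z => Real.exp (c*z) * stdPhi z) := by
  have h0 : Integrable (fun z : ℝ => Real.exp (-(1/2) * z^2)) :=
    integrable_exp_neg_mul_sq (by norm_num)
  have h1 : Integrable (fun z : ℝ => Real.exp (-(1/2) * (z - c)^2)) := h0.comp_sub_right c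
  have h2 := h1.const_mul ((Real.sqrt (2*Real.pi))⁻¹ * Real.exp (c^2/2))
  refine h2.congr (Filter.Eventually.of_forall fun z => ?_)
  unfold stdPhi
  show (Real.sqrt (2*Real.pi))⁻¹ * Real.exp (c^2/2) * Real.exp (-(1/2) * (z - c)^2)
      = Real.exp (c*z) * ((Real.sqrt (2*Real.pi))⁻¹ * Real.exp (-z^2/2))
  rw [mul_assoc, ← Real.exp_add, mul_comm (Real.exp (c*z)), mul_assoc, ← Real.exp_add]
  congr 1
  ring

/-- For `G ∈ L²(γ)`, `G_∞(x) = ∫ G(z) φ(z−x) dz` is well defined for all `x`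
and equals the everywhere-convergent power series `Σ c_m x^m` with
`c_m = (∫ G(z) H_m(z) dγ(z))/m!`. -/
theorem weierstrass_transform_power_series
    (G : ℝ → ℝ) (hmeas : Measurable G)
    (hL2 : Integrable (fun z => (G z) ^ 2 * stdPhi z)) :
    (∀ x : ℝ, Integrable (fun z => G z * stdPhi (z - x))) ∧
    (∀ x : ℝ,
      Summable (fun m : ℕ =>
        ((∫ z : ℝ, G z * hermiteEval m z * stdPhi z) / (Nat.factorial m : ℝ)) * x ^ m) ∧
      ∫ z : ℝ, G z * stdPhi (z - x)
        = ∑' m : ℕ,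
            ((∫ z : ℝ, G z * hermiteEval m z * stdPhi z) / (Nat.factorial m : ℝ)) * x ^ m) := by
  have hφm : Measurable stdPhi := stdPhi_continuous.measurable
  have hφnn := stdPhi_nonneg
  have hHmeas : ∀ m : ℕ, Measurable (hermiteEval m) := fun m =>
    (Polynomial.continuous_aeval _ : Continuous fun z : ℝ => Polynomial.aeval z (Polynomial.hermite m)).measurable
  -- integrability of |G| e^{cz} φ
  have hGexp : ∀ c : ℝ, Integrable (fun z => |G z| * (Real.exp (c*z) * stdPhi z)) := by
    intro c
    have hb : Integrable (fun z => (1/2) * ((G z)^2 * stdPhi z)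
        + (1/2) * (Real.exp ((2*c)*z) * stdPhi z)) :=
      (hL2.const_mul _).add ((int_exp_phi (2*c)).const_mul _)
    refine hb.mono' ?_ (Filter.Eventually.of_forall fun z => ?_)
    · exact (hmeas.abs.mul ((Real.measurable_exp.comp (measurable_id.const_mul c)).mul hφm)).aestronglyMeasurable
    · have h1 : Real.exp ((2*c)*z) = (Real.exp (c*z))^2 := by
        rw [sq, ← Real.exp_add]; ring_nf
      rw [Real.norm_eq_abs, abs_of_nonneg (mul_nonneg (abs_nonneg _) (mul_nonneg (Real.exp_nonneg _) (hφnn z))), h1]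
      nlinarith [mul_nonneg (sq_nonneg (|G z| - Real.exp (c*z))) (hφnn z), sq_abs (G z),
        hφnn z, Real.exp_pos (c*z), abs_nonneg (G z)]
  -- integrability of G * H_m * φ
  have hGH : ∀ m : ℕ, Integrable (fun z => G z * (hermiteEval m z * stdPhi z)) := by
    intro m
    obtain ⟨C, hC0, hC⟩ := hermiteAbs_bound m
    have hb : Integrable (fun z => C * (|G z| * (Real.exp (1*z) * stdPhi z))
        + C * (|G z| * (Real.exp ((-1)*z) * stdPhi z))) :=
      ((hGexp 1).const_mul C).add ((hGexp (-1)).const_mul C)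
    refine hb.mono' ?_ (Filter.Eventually.of_forall fun z => ?_)
    · exact (hmeas.mul ((hHmeas m).mul hφm)).aestronglyMeasurable
    · rw [Real.norm_eq_abs, abs_mul, abs_mul, abs_of_nonneg (hφnn z)]
      calc |G z| * (|hermiteEval m z| * stdPhi z)
          ≤ |G z| * (hermiteAbs m z * stdPhi z) :=
            mul_le_mul_of_nonneg_left
              (mul_le_mul_of_nonneg_right (abs_hermiteEval_le m z) (hφnn z)) (abs_nonneg _)
        _ ≤ |G z| * ((C * (Real.exp z + Real.exp (-z))) * stdPhi z) :=
            mul_le_mul_of_nonneg_left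
              (mul_le_mul_of_nonneg_right (hC z) (hφnn z)) (abs_nonneg _)
        _ = C * (|G z| * (Real.exp (1*z) * stdPhi z))
            + C * (|G z| * (Real.exp ((-1)*z) * stdPhi z)) := by
            rw [one_mul, neg_one_mul]; ring
  -- part 1
  have part1 : ∀ x : ℝ, Integrable (fun z => G z * stdPhi (z - x)) := by
    intro x
    have hb := (hGexp x).const_mul (Real.exp (-x^2/2))
    refine hb.mono' ?_ (Filter.Eventually.of_forall fun z => ?_)
    · exact (hmeas.mul (hφm.comp (measurable_id.sub_const x))).aestronglyMeasurable
    · rw [Real.norm_eq_abs, abs_mul, stdPhi_shift, abs_of_nonneg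
        (mul_nonneg (Real.exp_nonneg _) (hφnn z))]
      have h1 : Real.exp (x*z - x^2/2) = Real.exp (-x^2/2) * Real.exp (x*z) := by
        rw [← Real.exp_add]; ring_nf
      rw [h1]
      apply le_of_eq
      ring
  refine ⟨part1, fun x => ?_⟩
  -- the series
  set F : ℕ → ℝ → ℝ := fun m z => (x^m / (Nat.factorial m : ℝ)) * (G z * (hermiteEval m z * stdPhi z)) with hF
  have hFint : ∀ m, Integrable (F m) := fun m => (hGH m).const_mul _
  have hIint : ∀ m : ℕ, Integrable (fun z => |G z| * (|hermiteEval m z| * stdPhi z)) := by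
    intro m
    refine (hGH m).abs.congr (Filter.Eventually.of_forall fun z => ?_)
    simp only [abs_mul, abs_of_nonneg (hφnn z)]
  set I : ℕ → ℝ := fun m => ∫ z, |G z| * (|hermiteEval m z| * stdPhi z) with hI
  have hInn : ∀ m, 0 ≤ I m := fun m =>
    integral_nonneg fun z => mul_nonneg (abs_nonneg _) (mul_nonneg (abs_nonneg _) (hφnn z))
  -- the dominating function
  set gb : ℝ → ℝ := fun z => Real.exp (x^2/2) * (|G z| * (Real.exp (|x| * z) * stdPhi z)
      + |G z| * (Real.exp ((-|x|) * z) * stdPhi z)) with hgb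
  have hgbint : Integrable gb := (((hGexp |x|).add (hGexp (-|x|))).const_mul _)
  have hptwise : ∀ (n : ℕ) (z : ℝ),
      ∑ m ∈ Finset.range n, (|x|^m / (Nat.factorial m : ℝ)) * (|G z| * (|hermiteEval m z| * stdPhi z)) ≤ gb z := by
    intro n z
    have h1 : ∑ m ∈ Finset.range n, (|x|^m / (Nat.factorial m : ℝ)) * |hermiteEval m z|
        ≤ Real.exp (|z| * |x| + x^2/2) := by
      calc ∑ m ∈ Finset.range n, (|x|^m / (Nat.factorial m : ℝ)) * |hermiteEval m z|
          ≤ ∑ m ∈ Finset.range n, hermiteAbs m z * |x|^m / (Nat.factorial m : ℝ) := by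
            refine Finset.sum_le_sum fun m _ => ?_
            rw [div_mul_eq_mul_div, mul_comm]
            gcongr
            exact abs_hermiteEval_le m z
        _ ≤ Real.exp (|z| * |x| + x^2/2) :=
            sum_le_hasSum _ (fun m _ => div_nonneg
              (mul_nonneg (hermiteAbs_nonneg m z) (by positivity)) (by positivity))
              (hasSum_hermiteAbs z x)
    have h2 : Real.exp (|z| * |x| + x^2/2)
        ≤ Real.exp (x^2/2) * (Real.exp (|x| * z) + Real.exp ((-|x|) * z)) := by
      rw [Real.exp_add, mul_comm (Real.exp (|z| * |x|))]
      refine mul_le_mul_of_nonneg_left ?_ (Real.exp_nonneg _)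
      rcases le_or_gt 0 z with h | h
      · have hz : |z| * |x| = |x| * z := by rw [abs_of_nonneg h]; ring
        rw [hz]
        exact le_add_of_nonneg_right (Real.exp_pos _).le
      · have hz : |z| * |x| = (-|x|) * z := by rw [abs_of_neg h]; ring
        rw [hz]
        exact le_add_of_nonneg_left (Real.exp_pos _).le
    have hGφnn : 0 ≤ |G z| * stdPhi z := mul_nonneg (abs_nonneg _) (hφnn z)
    calc ∑ m ∈ Finset.range n, (|x|^m / (Nat.factorial m : ℝ)) * (|G z| * (|hermiteEval m z| * stdPhi z))
        = (|G z| * stdPhi z) * ∑ m ∈ Finset.range n, (|x|^m / (Nat.factorial m : ℝ)) * |hermiteEval m z| := by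
          rw [Finset.mul_sum]
          exact Finset.sum_congr rfl fun m _ => by ring
      _ ≤ (|G z| * stdPhi z) * Real.exp (|z| * |x| + x^2/2) :=
          mul_le_mul_of_nonneg_left h1 hGφnn
      _ ≤ (|G z| * stdPhi z) * (Real.exp (x^2/2) * (Real.exp (|x| * z) + Real.exp ((-|x|) * z))) :=
          mul_le_mul_of_nonneg_left h2 hGφnn
      _ = gb z := by rw [hgb]; ring
  -- summability of the norms of integrals
  have hSsum : Summable (fun m : ℕ => (|x|^m / (Nat.factorial m : ℝ)) * I m) := by
    refine summable_of_sum_range_le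
      (c := ∫ z, gb z) (fun m => mul_nonneg (by positivity) (hInn m)) (fun n => ?_)
    have hst : ∑ m ∈ Finset.range n, (|x|^m / (Nat.factorial m : ℝ)) * I m
        = ∫ z, ∑ m ∈ Finset.range n, (|x|^m / (Nat.factorial m : ℝ)) * (|G z| * (|hermiteEval m z| * stdPhi z)) := by
      rw [integral_finset_sum _ (fun m _ => (hIint m).const_mul _)]
      exact Finset.sum_congr rfl fun m _ => (integral_const_mul _ _).symm
    rw [hst]
    exact integral_mono (integrable_finset_sum _ fun m _ => (hIint m).const_mul _) hgbint
      (fun z => hptwise n z)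
  have hFnorm : ∀ m : ℕ, (∫ z, ‖F m z‖) = (|x|^m / (Nat.factorial m : ℝ)) * I m := by
    intro m
    simp only [hI]
    rw [← integral_const_mul]
    refine integral_congr_ae (Filter.Eventually.of_forall fun z => ?_)
    simp only [hF, Real.norm_eq_abs, abs_mul, abs_div, abs_pow, Nat.abs_cast,
      abs_of_nonneg (hφnn z)]
  have hFsum : Summable (fun m => ∫ z, ‖F m z‖) :=
    hSsum.congr fun m => (hFnorm m).symm
  have hmain := MeasureTheory.hasSum_integral_of_summable_integral_norm hFint hFsum
  have hpt : ∀ z : ℝ, (∑' m, F m z) = G z * stdPhi (z - x) := by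
    intro z
    have h := (hasSum_hermite z x).mul_left (G z * stdPhi z)
    have heq : (fun m : ℕ => (G z * stdPhi z) * (hermiteEval m z * x^m / (Nat.factorial m : ℝ)))
        = fun m => F m z := by
      funext m
      rw [hF]
      ring
    rw [heq] at h
    rw [h.tsum_eq, stdPhi_shift]
    ring
  have hterm : ∀ m : ℕ, (∫ z, F m z)
      = ((∫ z : ℝ, G z * hermiteEval m z * stdPhi z) / (Nat.factorial m : ℝ)) * x^m := by
    intro m
    simp only [hF]
    rw [integral_const_mul]
    have hmm : (∫ z : ℝ, G z * (hermiteEval m z * stdPhi z))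
        = ∫ z : ℝ, G z * hermiteEval m z * stdPhi z := by
      refine integral_congr_ae (Filter.Eventually.of_forall fun z => ?_)
      ring
    rw [hmm]
    ring
  constructor
  · exact hmain.summable.congr fun m => hterm m
  · have h1 : (∫ z : ℝ, G z * stdPhi (z - x)) = ∫ z, ∑' m, F m z :=
      integral_congr_ae (Filter.Eventually.of_forall fun z => (hpt z).symm)
    rw [h1, ← hmain.tsum_eq]
    exact tsum_congr hterm
end

section
/- Instability of Hermite rank under scaling: suppose G: ℝ → ℝ is measurable, not a.e. symmetric (i.e., z ↦ G(z) − G(−z) is not a.e. zero), and G(·×M) ∈ L²(γ) for some M > 1. Then the set E = {y ∈ (0,M) : E[G(yZ)·Z] = 0} has no accumulation point inside (0,M). -/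
open MeasureTheory Real Filter

set_option maxHeartbeats 1000000
namespace HRSI

lemma intA {G : ℝ → ℝ} (hmeas : Measurable G) {b : ℝ} (_hb : 0 < b)
    (hGb : Integrable (fun t => G t ^ 2 * Real.exp (-b * t ^ 2)))
    {r : ℝ} (hr : b < r) (n : ℕ) :
    Integrable (fun t => |G t| * |t| ^ n * Real.exp (-r * t ^ 2)) := by
  have hrpos : 0 < r := lt_trans _hb hr
  have hmeas' : AEStronglyMeasurable (fun t => |G t| * |t| ^ n * Real.exp (-r * t ^ 2))
      (volume : Measure ℝ) := by
    apply Measurable.aestronglyMeasurable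
    fun_prop
  have hpow : Integrable (fun t : ℝ => t ^ (2 * n) * Real.exp (-r * t ^ 2)) := by
    have h0 : Integrable (fun x : ℝ => x ^ (((2 * n : ℕ) : ℝ)) * Real.exp (-r * x ^ 2)) :=
      integrable_rpow_mul_exp_neg_mul_sq hrpos
        (lt_of_lt_of_le neg_one_lt_zero (Nat.cast_nonneg _))
    simpa only [Real.rpow_natCast] using h0
  refine (hGb.add hpow).mono' hmeas' (ae_of_all _ fun t => ?_)
  simp only [Pi.add_apply]
  have habs : |t| ^ (2 * n) = t ^ (2 * n) := (even_two_mul n).pow_abs t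
  have hsq : (|t| ^ n) ^ 2 = t ^ (2 * n) := by rw [← pow_mul, mul_comm n 2, habs]
  have h1 : 2 * (|G t| * |t| ^ n) ≤ G t ^ 2 + t ^ (2 * n) := by
    nlinarith [sq_nonneg (|G t| - |t| ^ n), sq_abs (G t), hsq]
  have h2 : Real.exp (-r * t ^ 2) ≤ Real.exp (-b * t ^ 2) :=
    Real.exp_le_exp.2 (by nlinarith [sq_nonneg t])
  have h3 : (0:ℝ) < Real.exp (-r * t ^ 2) := Real.exp_pos _
  have h5 : (0:ℝ) ≤ |G t| * |t| ^ n := by positivity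
  have hT : (0:ℝ) ≤ t ^ (2 * n) * Real.exp (-r * t ^ 2) := by
    rw [← habs]; positivity
  have hGpos : (0:ℝ) ≤ G t ^ 2 * Real.exp (-b * t ^ 2) := by positivity
  rw [Real.norm_eq_abs, abs_of_nonneg (by positivity)]
  nlinarith [mul_le_mul_of_nonneg_right h1 h3.le,
    mul_le_mul_of_nonneg_left h2 (sq_nonneg (G t))]

lemma intB {G : ℝ → ℝ} (hmeas : Measurable G) {b : ℝ} (hb : 0 < b)
    (hGb : Integrable (fun t => G t ^ 2 * Real.exp (-b * t ^ 2)))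
    {r : ℝ} (hr : b < r) :
    Integrable (fun t => G t * t * Real.exp (-r * t ^ 2)) := by
  refine (intA hmeas hb hGb hr 1).mono' ?_ (ae_of_all _ fun t => ?_)
  · apply Measurable.aestronglyMeasurable; fun_prop
  · rw [Real.norm_eq_abs, abs_mul, abs_mul, Real.abs_exp, pow_one]

lemma intC {G : ℝ → ℝ} (hmeas : Measurable G) {b : ℝ} (hb : 0 < b)
    (hGb : Integrable (fun t => G t ^ 2 * Real.exp (-b * t ^ 2)))
    {r : ℝ} (hr : b < r) (n : ℕ) {s : ℂ} (hsre : r ≤ s.re) :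
    Integrable (fun t : ℝ => ((G t * t ^ n : ℝ) : ℂ) * Complex.exp (-s * (t:ℂ) ^ 2)) := by
  refine (intA hmeas hb hGb hr n).mono' ?_ (ae_of_all _ fun t => ?_)
  · apply Measurable.aestronglyMeasurable
    apply Measurable.mul
    · fun_prop
    · exact (Complex.measurable_exp.comp (by fun_prop))
  · rw [norm_mul, Complex.norm_real, Complex.norm_exp]
    have hre : (-s * (t:ℂ) ^ 2).re = -s.re * t ^ 2 := by
      simp [Complex.mul_re, ← Complex.ofReal_pow]
    rw [hre, Real.norm_eq_abs, abs_mul, abs_pow]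
    have h2 : Real.exp (-s.re * t ^ 2) ≤ Real.exp (-r * t ^ 2) :=
      Real.exp_le_exp.2 (by nlinarith [sq_nonneg t])
    have hnn : (0:ℝ) ≤ |G t| * |t| ^ n := by positivity
    exact mul_le_mul_of_nonneg_left h2 hnn



lemma PhiDeriv {G : ℝ → ℝ} (hmeas : Measurable G) {b : ℝ} (hb : 0 < b)
    (hGb : Integrable (fun t => G t ^ 2 * Real.exp (-b * t ^ 2)))
    (hintC : ∀ {r : ℝ}, b < r → ∀ (n : ℕ) {s : ℂ}, r ≤ s.re →
      Integrable (fun t : ℝ => ((G t * t ^ n : ℝ) : ℂ) * Complex.exp (-s * (t:ℂ) ^ 2)))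
    (hintA : ∀ {r : ℝ}, b < r → ∀ (n : ℕ),
      Integrable (fun t => |G t| * |t| ^ n * Real.exp (-r * t ^ 2)))
    {s : ℂ} (hs : b < s.re) :
    DifferentiableAt ℂ
      (fun s : ℂ => ∫ t : ℝ, ((G t * t : ℝ) : ℂ) * Complex.exp (-s * (t:ℂ) ^ 2)) s := by
  set ε := (s.re - b) / 2 with hε
  have hεpos : 0 < ε := by rw [hε]; linarith
  set r := b + ε with hrdef
  have hrb : b < r := by rw [hrdef]; linarith
  have hrs : r ≤ s.re := by rw [hrdef, hε]; linarith
  have hball : ∀ x ∈ Metric.ball s ε, r ≤ x.re := by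
    intro x hx
    have h1 : |x.re - s.re| ≤ ‖x - s‖ := by
      simpa using Complex.abs_re_le_norm (x - s)
    have hd : ‖x - s‖ < ε := by rwa [Metric.mem_ball, Complex.dist_eq] at hx
    have := abs_lt.1 (lt_of_le_of_lt h1 hd)
    rw [hrdef]; linarith [this.1]
  have hmeasC : ∀ x : ℂ, AEStronglyMeasurable
      (fun t : ℝ => ((G t * t : ℝ) : ℂ) * Complex.exp (-x * (t:ℂ) ^ 2)) volume := by
    intro x
    apply Measurable.aestronglyMeasurable
    exact (Complex.measurable_ofReal.comp (hmeas.mul measurable_id)).mul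
      (Complex.measurable_exp.comp (by fun_prop))
  have hmeasC' : AEStronglyMeasurable
      (fun t : ℝ => ((G t * t : ℝ) : ℂ) *
        (Complex.exp (-s * (t:ℂ) ^ 2) * (-(t:ℂ) ^ 2))) volume := by
    apply Measurable.aestronglyMeasurable
    exact (Complex.measurable_ofReal.comp (hmeas.mul measurable_id)).mul
      ((Complex.measurable_exp.comp (by fun_prop)).mul (by fun_prop))
  have hF_int : Integrable
      (fun t : ℝ => ((G t * t : ℝ) : ℂ) * Complex.exp (-s * (t:ℂ) ^ 2)) volume := by
    simpa using hintC hrb 1 hrs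
  have hbound : ∀ᵐ t : ℝ, ∀ x ∈ Metric.ball s ε,
      ‖((G t * t : ℝ) : ℂ) * (Complex.exp (-x * (t:ℂ) ^ 2) * (-(t:ℂ) ^ 2))‖ ≤
        |G t| * |t| ^ 3 * Real.exp (-r * t ^ 2) := by
    refine ae_of_all _ fun t x hx => ?_
    have hxre := hball x hx
    have hre : (-x * (t:ℂ) ^ 2).re = -x.re * t ^ 2 := by
      simp [Complex.mul_re, ← Complex.ofReal_pow]
    rw [norm_mul, norm_mul, Complex.norm_real, Complex.norm_exp,
      hre, norm_neg, norm_pow, Complex.norm_real]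
    have h2 : Real.exp (-x.re * t ^ 2) ≤ Real.exp (-r * t ^ 2) :=
      Real.exp_le_exp.2 (by nlinarith [sq_nonneg t])
    have habs3 : |t| ^ 3 = |t| * |t| ^ 2 := by ring
    rw [Real.norm_eq_abs, abs_mul, Real.norm_eq_abs]
    calc |G t| * |t| * (Real.exp (-x.re * t ^ 2) * |t| ^ 2)
        ≤ |G t| * |t| * (Real.exp (-r * t ^ 2) * |t| ^ 2) := by
          apply mul_le_mul_of_nonneg_left _ (by positivity)
          exact mul_le_mul_of_nonneg_right h2 (by positivity)
      _ = |G t| * |t| ^ 3 * Real.exp (-r * t ^ 2) := by rw [habs3]; ring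
  have hdiff : ∀ᵐ t : ℝ, ∀ x ∈ Metric.ball s ε,
      HasDerivAt (fun x : ℂ => ((G t * t : ℝ) : ℂ) * Complex.exp (-x * (t:ℂ) ^ 2))
        (((G t * t : ℝ) : ℂ) * (Complex.exp (-x * (t:ℂ) ^ 2) * (-(t:ℂ) ^ 2))) x := by
    refine ae_of_all _ fun t x _ => ?_
    have h1 : HasDerivAt (fun x : ℂ => -x * (t:ℂ) ^ 2) (-(t:ℂ) ^ 2) x := by
      simpa using ((hasDerivAt_id x).neg.mul_const ((t:ℂ) ^ 2))
    exact (h1.cexp).const_mul _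
  have key := hasDerivAt_integral_of_dominated_loc_of_deriv_le (Metric.ball_mem_nhds s hεpos)
    (Eventually.of_forall hmeasC) hF_int hmeasC' hbound (hintA hrb 3) hdiff
  exact key.2.differentiableAt

lemma PhiReal (G : ℝ → ℝ) (s : ℝ) :
    ∫ t : ℝ, ((G t * t : ℝ) : ℂ) * Complex.exp (-(s:ℂ) * (t:ℂ) ^ 2) =
      ((∫ t : ℝ, G t * t * Real.exp (-s * t ^ 2) : ℝ) : ℂ) := by
  have h := integral_ofReal (𝕜 := ℂ) (f := fun t : ℝ => G t * t * Real.exp (-s * t ^ 2))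
    (μ := (volume : Measure ℝ))
  have h2 : ∫ t : ℝ, ((G t * t : ℝ) : ℂ) * Complex.exp (-(s:ℂ) * (t:ℂ) ^ 2)
      = ∫ t : ℝ, ((G t * t * Real.exp (-s * t ^ 2) : ℝ) : ℂ) := by
    congr 1; funext t
    rw [show -(s:ℂ) * (t:ℂ) ^ 2 = ((-s * t ^ 2 : ℝ) : ℂ) by push_cast; ring,
      ← Complex.ofReal_exp]
    push_cast; ring
  rw [h2]; exact h

lemma scaleZero {G : ℝ → ℝ} {y : ℝ} (hy : 0 < y)
    (h0 : ∫ z : ℝ, G (y * z) * z * stdPhi z = 0) :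
    ∫ t : ℝ, G t * t * Real.exp (-(2 * y ^ 2)⁻¹ * t ^ 2) = 0 := by
  have hyne : y ≠ 0 := hy.ne'
  set c := (Real.sqrt (2 * Real.pi))⁻¹ with hc
  have hcpos : 0 < c := by rw [hc]; positivity
  set k : ℝ → ℝ := fun t => G t * (t / y) * stdPhi (t / y) with hk
  have h1 : ∀ z : ℝ, k (y * z) = G (y * z) * z * stdPhi z := by
    intro z; simp only [hk]; rw [mul_div_cancel_left₀ _ hyne]
  have h2 : ∫ z, k (y * z) = |y⁻¹| • ∫ t, k t := Measure.integral_comp_mul_left k y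
  have h3 : ∫ z, k (y * z) = 0 := by simp_rw [h1]; exact h0
  have h4 : ∫ t, k t = 0 := by
    rw [h3] at h2
    have : |y⁻¹| ≠ 0 := by simp [hyne]
    rcases smul_eq_zero.1 h2.symm with h | h
    · exact absurd h this
    · exact h
  have keq : ∀ t : ℝ, k t = (c / y) * (G t * t * Real.exp (-(2 * y ^ 2)⁻¹ * t ^ 2)) := by
    intro t
    have harg : -(t / y) ^ 2 / 2 = -(2 * y ^ 2)⁻¹ * t ^ 2 := by
      rw [div_pow]; field_simp
    simp only [hk, stdPhi, ← hc, harg]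
    ring
  rw [funext keq, integral_const_mul] at h4
  have : c / y ≠ 0 := div_ne_zero hcpos.ne' hyne
  exact (mul_eq_zero.1 h4).resolve_left this



lemma stepB {H : ℝ → ℝ} (hHmeas : Measurable H) {s₁ : ℝ}
    (hint : ∀ n : ℕ, Integrable (fun t => H t * t * Real.exp (-(s₁ + n) * t ^ 2)))
    (hzero : ∀ n : ℕ, ∫ t in Set.Ioi 0, H t * t * Real.exp (-(s₁ + n) * t ^ 2) = 0) :
    ∀ᵐ t : ℝ, 0 < t → H t = 0 := by
  set f₂ : ℝ → ℝ := fun t => H t * t * Real.exp (-s₁ * t ^ 2) with hf₂def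
  have hf₂meas : Measurable f₂ := by
    apply ((hHmeas.mul measurable_id).mul _)
    fun_prop
  have hf₂ : Integrable f₂ := by
    rw [hf₂def]
    refine (hint 0).congr (ae_of_all _ fun t => ?_)
    norm_num
  have key : ∀ (n : ℕ) (t : ℝ),
      f₂ t * (Real.exp (-t ^ 2)) ^ n = H t * t * Real.exp (-(s₁ + n) * t ^ 2) := by
    intro n t
    have harg : (-(s₁ + (n:ℝ)) * t ^ 2) = (-s₁ * t ^ 2) + n * (-t ^ 2) := by ring
    rw [harg, Real.exp_add, Real.exp_nat_mul, hf₂def]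
    ring
  -- vanishing against polynomials of exp (-t^2)
  have hqzero : ∀ q : Polynomial ℝ,
      ∫ t in Set.Ioi 0, f₂ t * q.eval (Real.exp (-t ^ 2)) = 0 := by
    intro q
    have hterm : ∀ (i : ℕ) (t : ℝ),
        f₂ t * (q.coeff i * (Real.exp (-t ^ 2)) ^ i) =
          q.coeff i * (H t * t * Real.exp (-(s₁ + i) * t ^ 2)) := by
      intro i t; rw [← key i t]; ring
    simp_rw [Polynomial.eval_eq_sum_range, Finset.mul_sum, hterm]
    rw [integral_finset_sum _ (fun i _ => ((hint i).integrableOn.const_mul _))]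
    refine Finset.sum_eq_zero fun i _ => ?_
    rw [integral_const_mul, hzero i, mul_zero]
  -- vanishing against continuous functions of exp (-t^2)
  have hgcont : ∀ g : ℝ → ℝ, Continuous g →
      ∫ t in Set.Ioi 0, f₂ t * g (Real.exp (-t ^ 2)) = 0 := by
    intro g hg
    have hmem : ∀ t : ℝ, t ∈ Set.Ioi (0:ℝ) → Real.exp (-t ^ 2) ∈ Set.Icc (0:ℝ) 1 := by
      intro t _
      exact ⟨(Real.exp_pos _).le, Real.exp_le_one_iff.2 (by nlinarith [sq_nonneg t])⟩
    set C₂ : ℝ := ∫ t in Set.Ioi 0, |f₂ t| with hC₂def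
    have hC₂nonneg : 0 ≤ C₂ := integral_nonneg fun t => abs_nonneg _
    -- integrability of f₂ * (continuous ∘ exp) on Ioi 0
    have hIntg : ∀ g' : ℝ → ℝ, Continuous g' →
        IntegrableOn (fun t => f₂ t * g' (Real.exp (-t ^ 2))) (Set.Ioi 0) := by
      intro g' hg'
      obtain ⟨C₀, hC₀⟩ := isCompact_Icc.exists_bound_of_continuousOn
        (s := Set.Icc (0:ℝ) 1) hg'.continuousOn
      refine ((hf₂.abs.const_mul C₀).integrableOn).mono' ?_ ?_
      · exact (hf₂meas.mul (hg'.measurable.comp (by fun_prop))).aestronglyMeasurable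
      · refine (ae_restrict_iff' measurableSet_Ioi).2 (ae_of_all _ fun t ht => ?_)
        rw [Real.norm_eq_abs, abs_mul]
        have := hC₀ _ (hmem t ht)
        rw [Real.norm_eq_abs] at this
        calc |f₂ t| * |g' (Real.exp (-t ^ 2))| ≤ |f₂ t| * C₀ :=
              mul_le_mul_of_nonneg_left this (abs_nonneg _)
          _ = C₀ * |f₂ t| := by ring
    set I : ℝ := ∫ t in Set.Ioi 0, f₂ t * g (Real.exp (-t ^ 2)) with hIdef
    have hIle : ∀ ε' : ℝ, 0 < ε' → |I| ≤ 0 + ε' := by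
      intro ε' hε'
      set ε : ℝ := ε' / (C₂ + 1) with hεdef
      have hεpos : 0 < ε := by positivity
      set gc : C(Set.Icc (0:ℝ) 1, ℝ) :=
        ContinuousMap.restrict (Set.Icc (0:ℝ) 1) ⟨g, hg⟩ with hgc
      obtain ⟨p, hp⟩ := exists_polynomial_near_continuousMap 0 1 gc ε hεpos
      have hpeval : ∀ v : ℝ, v ∈ Set.Icc (0:ℝ) 1 → |g v - p.eval v| ≤ ε := by
        intro v hv
        have h1 := (p.toContinuousMapOn (Set.Icc (0:ℝ) 1) - gc).norm_coe_le_norm ⟨v, hv⟩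
        have h2 : (p.toContinuousMapOn (Set.Icc (0:ℝ) 1) - gc) ⟨v, hv⟩ = p.eval v - g v := by
          simp [hgc]
        rw [h2, Real.norm_eq_abs] at h1
        rw [abs_sub_comm]
        exact le_trans h1 hp.le
      have int2 : IntegrableOn (fun t => f₂ t * Polynomial.eval (Real.exp (-t ^ 2)) p)
          (Set.Ioi 0) := hIntg _ p.continuous_aeval
      have int1 : IntegrableOn
          (fun t => f₂ t * (g (Real.exp (-t ^ 2)) - Polynomial.eval (Real.exp (-t ^ 2)) p))
          (Set.Ioi 0) := by
        refine ((hIntg g hg).sub int2).congr (ae_of_all _ fun t => ?_)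
        simp only [Pi.sub_apply]
        ring
      have hsplit : I = (∫ t in Set.Ioi 0,
            f₂ t * (g (Real.exp (-t ^ 2)) - Polynomial.eval (Real.exp (-t ^ 2)) p)) +
          ∫ t in Set.Ioi 0, f₂ t * Polynomial.eval (Real.exp (-t ^ 2)) p := by
        rw [hIdef, ← integral_add int1 int2]
        congr 1; funext t; ring
      rw [hsplit, hqzero p, add_zero]
      have habs : |∫ t in Set.Ioi 0,
          f₂ t * (g (Real.exp (-t ^ 2)) - Polynomial.eval (Real.exp (-t ^ 2)) p)| ≤
          ∫ t in Set.Ioi 0, ε * |f₂ t| := by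
        have habs0 := norm_integral_le_integral_norm (μ := volume.restrict (Set.Ioi 0))
          (f := fun t => f₂ t * (g (Real.exp (-t ^ 2)) - Polynomial.eval (Real.exp (-t ^ 2)) p))
        rw [Real.norm_eq_abs] at habs0
        refine le_trans habs0 ?_
        refine setIntegral_mono_on int1.norm ((hf₂.abs.const_mul ε).integrableOn)
          measurableSet_Ioi fun t ht => ?_
        rw [Real.norm_eq_abs, abs_mul]
        calc |f₂ t| * |g (Real.exp (-t ^ 2)) - Polynomial.eval (Real.exp (-t ^ 2)) p|
            ≤ |f₂ t| * ε := mul_le_mul_of_nonneg_left (hpeval _ (hmem t ht)) (abs_nonneg _)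
          _ = ε * |f₂ t| := by ring
      rw [integral_const_mul] at habs
      have : ε * C₂ ≤ ε' := by
        rw [hεdef]
        rw [div_mul_eq_mul_div, div_le_iff₀ (by positivity)]
        nlinarith
      linarith [habs]
    have : |I| ≤ 0 := le_of_forall_pos_le_add hIle
    have : I = 0 := abs_nonpos_iff.mp this
    rw [hIdef] at this
    exact this
  -- test against smooth compactly supported functions
  set f₁ : ℝ → ℝ := Set.indicator (Set.Ioi 0) f₂ with hf₁def
  have hf₁int : Integrable f₁ := hf₂.integrableOn.integrable_indicator measurableSet_Ioi
  have hae : ∀ᵐ t : ℝ, f₁ t = 0 := by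
    refine ae_eq_zero_of_integral_contDiff_smul_eq_zero hf₁int.locallyIntegrable ?_
    intro ψ hψ hψsupp
    obtain ⟨R, hRpos, hR⟩ := hψsupp.exists_pos_le_norm
    -- build the continuous transfer function g
    set g : ℝ → ℝ := fun v => if 0 < v then ψ (Real.sqrt (-Real.log v)) else 0 with hgdef
    have hgcont' : Continuous g := by
      rw [continuous_iff_continuousAt]
      intro v
      rcases lt_or_ge 0 v with hv | hv
      · have hev : g =ᶠ[nhds v] fun w => ψ (Real.sqrt (-Real.log w)) := by
          filter_upwards [IsOpen.mem_nhds isOpen_Ioi hv] with w hw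
          simp only [hgdef]; rw [if_pos (Set.mem_Ioi.1 hw)]
        have hca : ContinuousAt (fun w => ψ (Real.sqrt (-Real.log w))) v :=
          hψ.continuous.continuousAt.comp
            ((Real.continuous_sqrt.continuousAt).comp
              ((Real.continuousAt_log hv.ne').neg))
        exact hca.congr hev.symm
      · have hδ : (0:ℝ) < Real.exp (-(R ^ 2)) := Real.exp_pos _
        have hev : g =ᶠ[nhds v] fun _ => 0 := by
          filter_upwards [IsOpen.mem_nhds isOpen_Iio
            (show v ∈ Set.Iio (Real.exp (-(R ^ 2))) from lt_of_le_of_lt hv hδ)] with w hw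
          rw [hgdef]
          by_cases hw0 : 0 < w
          · simp only [hw0, if_true]
            apply hR
            have hlog : Real.log w ≤ -(R ^ 2) := by
              have := Real.log_le_log hw0 (le_of_lt hw)
              rwa [Real.log_exp] at this
            have h1 : R ^ 2 ≤ -Real.log w := by linarith
            have h2 : Real.sqrt (R ^ 2) ≤ Real.sqrt (-Real.log w) := Real.sqrt_le_sqrt h1
            rw [Real.sqrt_sq_eq_abs] at h2
            rw [Real.norm_eq_abs, abs_of_nonneg (Real.sqrt_nonneg _)]
            exact le_trans (le_abs_self R) h2
          · simp [hw0]
        exact (continuousAt_const).congr hev.symm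
    have hgψ : ∀ t : ℝ, t ∈ Set.Ioi (0:ℝ) → g (Real.exp (-t ^ 2)) = ψ t := by
      intro t ht
      rw [hgdef]
      simp only [Real.exp_pos, if_true]
      rw [Real.log_exp, neg_neg, Real.sqrt_sq (le_of_lt ht)]
    have h1 : ∫ t : ℝ, ψ t • f₁ t = ∫ t in Set.Ioi 0, f₂ t * g (Real.exp (-t ^ 2)) := by
      rw [hf₁def]
      have : (fun t => ψ t • Set.indicator (Set.Ioi 0) f₂ t) =
          Set.indicator (Set.Ioi 0) (fun t => f₂ t * g (Real.exp (-t ^ 2))) := by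
        funext t
        by_cases ht : t ∈ Set.Ioi (0:ℝ)
        · rw [Set.indicator_of_mem ht, Set.indicator_of_mem ht, hgψ t ht, smul_eq_mul]
          ring
        · rw [Set.indicator_of_notMem ht, Set.indicator_of_notMem ht, smul_zero]
      rw [this, integral_indicator measurableSet_Ioi]
    rw [h1]
    exact hgcont g hgcont'
  filter_upwards [hae] with t ht hpos
  rw [hf₁def, Set.indicator_of_mem (Set.mem_Ioi.2 hpos)] at ht
  have hexp : Real.exp (-s₁ * t ^ 2) ≠ 0 := (Real.exp_pos _).ne'
  have : H t * t = 0 := by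
    rcases mul_eq_zero.1 ht with h | h
    · exact h
    · exact absurd h hexp
  rcases mul_eq_zero.1 this with h | h
  · exact h
  · exact absurd h hpos.ne'

end HRSI

/-- Instability of the Hermite rank under scaling: if `G` is measurable, not a.e.
symmetric, and `G(·×M) ∈ L²(γ)` for some `M > 1`, then the set of scales
`y ∈ (0,M)` where `E[G(yZ)Z]` vanishes has no accumulation point in `(0,M)`. -/
theorem hermite_rank_scale_instability
    (G : ℝ → ℝ) (hmeas : Measurable G)
    (hnotsym : ¬ ∀ᵐ z : ℝ, G z - G (-z) = 0)
    (M : ℝ) (hM : 1 < M)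
    (hL2 : Integrable (fun z => (G (M * z)) ^ 2 * stdPhi z)) :
    ∀ y ∈ Set.Ioo (0 : ℝ) M,
      ¬ AccPt y (𝓟 {y' : ℝ | y' ∈ Set.Ioo (0 : ℝ) M ∧
          ∫ z : ℝ, G (y' * z) * z * stdPhi z = 0}) := by
  intro y₀ hy₀ hacc
  have hMpos : 0 < M := lt_trans one_pos hM
  set σ₀ : ℝ := (2 * M ^ 2)⁻¹ with hσ₀def
  have hσ₀pos : 0 < σ₀ := by positivity
  -- base integrability
  have hGb : Integrable (fun t => G t ^ 2 * Real.exp (-σ₀ * t ^ 2)) := by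
    have hs2π : Real.sqrt (2 * Real.pi) ≠ 0 := by positivity
    have h1 : (fun z => Real.sqrt (2 * Real.pi) * ((G (M * z)) ^ 2 * stdPhi z)) =
        (fun z => (fun t => G t ^ 2 * Real.exp (-σ₀ * t ^ 2)) (M * z)) := by
      funext z
      show Real.sqrt (2 * Real.pi) *
          ((G (M * z)) ^ 2 * ((Real.sqrt (2 * Real.pi))⁻¹ * Real.exp (-z ^ 2 / 2))) =
        G (M * z) ^ 2 * Real.exp (-σ₀ * (M * z) ^ 2)
      have harg : -σ₀ * (M * z) ^ 2 = -z ^ 2 / 2 := by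
        rw [hσ₀def]; field_simp
      rw [harg]
      field_simp
    have h2 : Integrable (fun z => (fun t => G t ^ 2 * Real.exp (-σ₀ * t ^ 2)) (M * z)) := by
      rw [← h1]; exact hL2.const_mul _
    exact (integrable_comp_mul_left_iff _ (ne_of_gt hMpos)).1 h2
  have hintB : ∀ {r : ℝ}, σ₀ < r → Integrable (fun t => G t * t * Real.exp (-r * t ^ 2)) :=
    fun hr => HRSI.intB hmeas hσ₀pos hGb hr
  -- the analytic function
  set Φ : ℂ → ℂ := fun s => ∫ t : ℝ, ((G t * t : ℝ) : ℂ) * Complex.exp (-s * (t:ℂ) ^ 2)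
    with hΦdef
  set U : Set ℂ := {s : ℂ | σ₀ < s.re} with hUdef
  have hUopen : IsOpen U := isOpen_lt continuous_const Complex.continuous_re
  have hdiff : DifferentiableOn ℂ Φ U := by
    intro s hs
    have hs' : σ₀ < s.re := hs
    exact (HRSI.PhiDeriv hmeas hσ₀pos hGb
      (fun {r} hr n {s} hs'' => HRSI.intC hmeas hσ₀pos hGb hr n hs'')
      (fun {r} hr n => HRSI.intA hmeas hσ₀pos hGb hr n) hs').differentiableWithinAt
  have han : AnalyticOnNhd ℂ Φ U := hdiff.analyticOnNhd hUopen
  have hpre : IsPreconnected U := (convex_halfSpace_re_gt σ₀).isPreconnected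
  have hy₀pos : 0 < y₀ := hy₀.1
  set σ₁ : ℝ := (2 * y₀ ^ 2)⁻¹ with hσ₁def
  have hσ₁gt : σ₀ < σ₁ := by
    rw [hσ₀def, hσ₁def]
    have h1 : 0 < 2 * y₀ ^ 2 := by positivity
    have h2 : 2 * y₀ ^ 2 < 2 * M ^ 2 := by nlinarith [hy₀.2]
    exact inv_strictAnti₀ h1 h2
  have hσ₁U : (σ₁ : ℂ) ∈ U := by
    rw [hUdef]; exact hσ₁gt
  -- frequently-zero points
  rw [accPt_iff_frequently] at hacc
  have hfreq0 : ∃ᶠ s : ℂ in nhds (σ₁ : ℂ), Φ s = 0 ∧ s ≠ (σ₁ : ℂ) := by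
    have hc : ContinuousAt (fun y : ℝ => 2 * y ^ 2) y₀ := by fun_prop
    have hinv : ContinuousAt (fun y : ℝ => (2 * y ^ 2)⁻¹) y₀ :=
      hc.inv₀ (by positivity)
    have hmap : Tendsto (fun y : ℝ => (((2 * y ^ 2)⁻¹ : ℝ) : ℂ)) (nhds y₀) (nhds (σ₁ : ℂ)) := by
      rw [hσ₁def]
      exact (Complex.continuous_ofReal.continuousAt.comp hinv).tendsto
    refine hmap.frequently (hacc.mono ?_)
    rintro y ⟨hyne, hyIoo, hyint⟩
    constructor
    · show Φ (((2 * y ^ 2)⁻¹ : ℝ) : ℂ) = 0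
      simp only [hΦdef]
      rw [HRSI.PhiReal G ((2 * y ^ 2)⁻¹), HRSI.scaleZero hyIoo.1 hyint, Complex.ofReal_zero]
    · intro hcontra
      apply hyne
      have h1 : ((2 * y ^ 2)⁻¹ : ℝ) = (2 * y₀ ^ 2)⁻¹ := by
        rw [hσ₁def] at hcontra
        exact_mod_cast hcontra
      have h2 : 2 * y ^ 2 = 2 * y₀ ^ 2 := inv_injective h1
      have h3 : (y - y₀) * (y + y₀) = 0 := by nlinarith
      rcases mul_eq_zero.1 h3 with h | h
      · linarith
      · have : 0 < y + y₀ := by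
          have := hyIoo.1; linarith
        linarith
  have hfreq : ∃ᶠ s in nhdsWithin (σ₁ : ℂ) {(σ₁ : ℂ)}ᶜ, Φ s = 0 := by
    rw [frequently_nhdsWithin_iff]
    exact hfreq0.mono fun s hs => ⟨hs.1, hs.2⟩
  have hΦzero : Set.EqOn Φ 0 U :=
    han.eqOn_zero_of_preconnected_of_frequently_eq_zero hpre hσ₁U hfreq
  have hZ : ∀ s : ℝ, σ₀ < s → ∫ t : ℝ, G t * t * Real.exp (-s * t ^ 2) = 0 := by
    intro s hs
    have hmem : (s : ℂ) ∈ U := by rw [hUdef]; exact hs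
    have h1 := hΦzero hmem
    simp only [hΦdef, Pi.zero_apply] at h1
    rw [HRSI.PhiReal G s] at h1
    exact_mod_cast h1
  -- Step B
  set H : ℝ → ℝ := fun t => G t - G (-t) with hHdef
  have hHmeas : Measurable H := hmeas.sub (hmeas.comp measurable_neg)
  set s₁ : ℝ := σ₀ + 1 with hs₁def
  have hs₁gt : ∀ n : ℕ, σ₀ < s₁ + n := by
    intro n
    have := Nat.cast_nonneg (α := ℝ) n
    rw [hs₁def]; linarith
  have hGneg : ∀ {r : ℝ}, σ₀ < r →
      Integrable (fun t => G (-t) * (-t) * Real.exp (-r * t ^ 2)) := by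
    intro r hr
    have h3 := (hintB hr).comp_mul_left' (R := (-1:ℝ)) (by norm_num)
    refine h3.congr (ae_of_all _ fun t => ?_)
    simp only [neg_one_mul, neg_sq]
  have hHint : ∀ n : ℕ, Integrable (fun t => H t * t * Real.exp (-(s₁ + n) * t ^ 2)) := by
    intro n
    have h1 := hintB (hs₁gt n)
    have h2 := hGneg (hs₁gt n)
    refine (h1.add h2).congr (ae_of_all _ fun t => ?_)
    simp only [Pi.add_apply, hHdef]
    ring
  have hHzero : ∀ n : ℕ, ∫ t in Set.Ioi 0, H t * t * Real.exp (-(s₁ + n) * t ^ 2) = 0 := by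
    intro n
    have h1 := hintB (hs₁gt n)
    have h2 := hGneg (hs₁gt n)
    have h0 : ∫ t, G t * t * Real.exp (-(s₁ + n) * t ^ 2) = 0 := hZ _ (hs₁gt n)
    have hneg : ∫ x in Set.Iic (0:ℝ), G x * x * Real.exp (-(s₁ + n) * x ^ 2) =
        ∫ x in Set.Ioi (0:ℝ), G (-x) * (-x) * Real.exp (-(s₁ + n) * x ^ 2) := by
      have h4 := integral_comp_neg_Ioi (0:ℝ)
        (fun x => G x * x * Real.exp (-(s₁ + n) * x ^ 2))
      rw [neg_zero] at h4
      rw [← h4]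
      congr 1
      funext x
      simp only [neg_sq]
    have hsplit := intervalIntegral.integral_Iic_add_Ioi (b := (0:ℝ))
      h1.integrableOn h1.integrableOn
    rw [h0, hneg] at hsplit
    have hsum : ∫ x in Set.Ioi (0:ℝ),
        (G (-x) * (-x) * Real.exp (-(s₁ + n) * x ^ 2) +
         G x * x * Real.exp (-(s₁ + n) * x ^ 2)) = 0 := by
      rw [integral_add h2.integrableOn h1.integrableOn]
      linarith [hsplit]
    have hfin : ∫ t in Set.Ioi (0:ℝ), H t * t * Real.exp (-(s₁ + n) * t ^ 2) =
        ∫ x in Set.Ioi (0:ℝ),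
          (G (-x) * (-x) * Real.exp (-(s₁ + n) * x ^ 2) +
           G x * x * Real.exp (-(s₁ + n) * x ^ 2)) := by
      congr 1
      funext x
      simp only [hHdef]
      ring
    rw [hfin]
    exact hsum
  have hae := HRSI.stepB hHmeas hHint hHzero
  -- conclude
  apply hnotsym
  have hnull : volume {t : ℝ | 0 < t ∧ H t ≠ 0} = 0 := by
    have h' : {t : ℝ | 0 < t ∧ H t ≠ 0} = {t : ℝ | ¬ (0 < t → H t = 0)} := by
      ext t; simp [Classical.not_imp]
    rw [h']
    exact ae_iff.1 hae
  have hnull2 : volume {t : ℝ | t < 0 ∧ H t ≠ 0} = 0 := by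
    refine measure_mono_null (fun t ht => ?_) (?_ : volume (-{t : ℝ | 0 < t ∧ H t ≠ 0}) = 0)
    · rw [Set.mem_neg]
      refine ⟨by linarith [ht.1], fun hcon => ht.2 ?_⟩
      have hH : H t = -(H (-t)) := by
        simp only [hHdef, neg_neg]; ring
      rw [hH, hcon, neg_zero]
    · rw [Measure.measure_neg]; exact hnull
  rw [ae_iff]
  refine measure_mono_null (fun t ht => ?_) (measure_union_null hnull hnull2)
  have hHt : H t ≠ 0 := ht
  rcases lt_trichotomy 0 t with h | h | h
  · exact Or.inl ⟨h, hHt⟩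
  · exfalso; apply hHt; simp only [hHdef, ← h, neg_zero]; ring
  · exact Or.inr ⟨h, hHt⟩
end
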